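/- Consider the randomized greedy freezing procedure with parameter p′ ∈ (0,1) in the CSP setting, and suppose ℙ[C] ≤ p for every C ∈ 𝒞. Let T ⊆ 𝒞 be a collection of constraints such that vbl(C) ∩ vbl(C′) = ∅ for all distinct C, C′ ∈ T. Then E_ν[ ∏_{C∈T} ℙ[C | P_s] ] ≤ p^{|T|}. -/

import Mathlib

open Finset
open scoped Classical

/-! ## The CSP setting

A constraint satisfaction problem has variables `Fin n`, each taking values in `Fin q`
(the uniform product measure `ℙ` makes the variables independent and uniform), and
constraints `Fin m`; constraint `j` depends only on the variables in `vbl j`, and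
`viol j σ` means that the assignment `σ` violates constraint `j`. -/

/-- A full assignment `σ` is compatible with (extends) the partial assignment `X`. -/
def Compat {n q : ℕ} (X : Fin n → Option (Fin q)) (σ : Fin n → Fin q) : Prop :=
  ∀ v a, X v = some a → σ v = a

/-- `condP viol j X` is the conditional probability `ℙ[C_j | X]` that constraint `j` is
violated, under the uniform product measure conditioned on agreeing with the partial
assignment `X`. -/
noncomputable def condP {n q m : ℕ} (viol : Fin m → (Fin n → Fin q) → Prop)
    (j : Fin m) (X : Fin n → Option (Fin q)) : ℝ :=
  ((Finset.univ.filter fun σ : Fin n → Fin q => Compat X σ ∧ viol j σ).card : ℝ) /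
    ((Finset.univ.filter fun σ : Fin n → Fin q => Compat X σ).card : ℝ)

/-- One step of the greedy freezing procedure, processing variable `i`, where the random
seed `ω` prescribes the value a variable receives when it is assigned. The state is a pair
(partial assignment, set of frozen variables). If `i` is frozen it is skipped; otherwise
`i` is assigned the value `ω i`, and every still-unassigned variable lying in a constraint
that has become dangerous (conditional probability of violation exceeding `p'`) is frozen. -/
noncomputable def greedyStep {n q m : ℕ} (vbl : Fin m → Finset (Fin n))
    (viol : Fin m → (Fin n → Fin q) → Prop) (p' : ℝ) (ω : Fin n → Fin q)
    (st : (Fin n → Option (Fin q)) × Finset (Fin n)) (i : Fin n) :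
    (Fin n → Option (Fin q)) × Finset (Fin n) :=
  if i ∈ st.2 then st
  else
    let X' := Function.update st.1 i (some (ω i))
    (X', st.2 ∪ Finset.univ.filter fun v =>
      X' v = none ∧ ∃ j, v ∈ vbl j ∧ p' < condP viol j X')

/-- `greedyRun vbl viol p' ω h` is the state of the greedy freezing procedure with
parameter `p'` and random seed `ω` after the variables `v_1, …, v_h` (i.e. the first `h`
variables in the fixed order) have been processed: since the procedure always selects the
lowest-indexed available variable, processing the variables in index order — skipping
frozen ones — implements the procedure exactly, and the first component of
`greedyRun vbl viol p' ω h` is the partial assignment `P_{ι(h)}`, where `ι(h)` is the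
number of variables among `v_1, …, v_h` that have been assigned values.
In particular `greedyRun vbl viol p' ω n` gives the final partial assignment `P_s`, and
as `ω` ranges uniformly over `Fin n → Fin q`, its law is the distribution `ν`. -/
noncomputable def greedyRun {n q m : ℕ} (vbl : Fin m → Finset (Fin n))
    (viol : Fin m → (Fin n → Fin q) → Prop) (p' : ℝ) (ω : Fin n → Fin q) :
    ℕ → (Fin n → Option (Fin q)) × Finset (Fin n)
  | 0 => (fun _ => none, ∅)
  | h + 1 =>
    if hh : h < n then greedyStep vbl viol p' ω (greedyRun vbl viol p' ω h) ⟨h, hh⟩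
    else greedyRun vbl viol p' ω h

set_option maxHeartbeats 1000000
section AuxLemmas

variable {n q m : ℕ}

lemma compat_update_iff (X : Fin n → Option (Fin q)) (v : Fin n) (hv : X v = none)
    (a : Fin q) (σ : Fin n → Fin q) :
    Compat (Function.update X v (some a)) σ ↔ Compat X σ ∧ σ v = a := by
  constructor
  · intro h
    refine ⟨fun w b hw => ?_, h v a (by simp)⟩
    have hwv : w ≠ v := by rintro rfl; rw [hv] at hw; exact nomatch hw
    exact h w b (by simpa [Function.update_of_ne hwv])
  · rintro ⟨h1, h2⟩ w b hw
    rcases eq_or_ne w v with rfl | hne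
    · simp only [Function.update_self] at hw
      rw [h2]; exact (Option.some_inj.mp hw).symm ▸ rfl
    · exact h1 w b (by simpa [Function.update_of_ne hne] using hw)

/-- Summing the fiber counts over the new value recovers the original count. -/

lemma sum_card_update (X : Fin n → Option (Fin q)) (v : Fin n) (hv : X v = none)
    (P : (Fin n → Fin q) → Prop) :
    ∑ a : Fin q,
      (Finset.univ.filter fun σ : Fin n → Fin q =>
        Compat (Function.update X v (some a)) σ ∧ P σ).card
      = (Finset.univ.filter fun σ : Fin n → Fin q => Compat X σ ∧ P σ).card := by
  have := Finset.card_eq_sum_card_fiberwise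
    (s := Finset.univ.filter fun σ : Fin n → Fin q => Compat X σ ∧ P σ)
    (t := (Finset.univ : Finset (Fin q))) (f := fun σ => σ v) (fun x _ => mem_univ _)
  rw [this]
  refine Finset.sum_congr rfl fun a _ => ?_
  congr 1
  rw [Finset.filter_filter]
  apply Finset.filter_congr
  intro σ _
  rw [compat_update_iff X v hv a σ]
  constructor
  · rintro ⟨⟨h1, h2⟩, h3⟩; exact ⟨⟨h1, h3⟩, h2⟩
  · rintro ⟨⟨h1, h2⟩, h3⟩; exact ⟨⟨h1, h3⟩, h2⟩

/-- If `P` is invariant under changing coordinate `v`, the fiber counts are all equal. -/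

lemma card_update_const (X : Fin n → Option (Fin q)) (v : Fin n) (hv : X v = none)
    (P : (Fin n → Fin q) → Prop)
    (hP : ∀ (σ : Fin n → Fin q) (b : Fin q), P σ → P (Function.update σ v b))
    (a b : Fin q) :
    (Finset.univ.filter fun σ : Fin n → Fin q =>
        Compat (Function.update X v (some a)) σ ∧ P σ).card
      = (Finset.univ.filter fun σ : Fin n → Fin q =>
        Compat (Function.update X v (some b)) σ ∧ P σ).card := by
  apply Finset.card_bij' (fun σ _ => Function.update σ v b) (fun σ _ => Function.update σ v a)
  · intro σ hσ
    simp only [mem_filter, mem_univ, true_and, compat_update_iff X v hv] at hσ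
    rw [Function.update_idem, ← hσ.1.2, Function.update_eq_self]
  · intro σ hσ
    simp only [mem_filter, mem_univ, true_and, compat_update_iff X v hv] at hσ
    rw [Function.update_idem, ← hσ.1.2, Function.update_eq_self]
  · intro σ hσ
    simp only [mem_filter, mem_univ, true_and, compat_update_iff X v hv] at hσ ⊢
    exact ⟨⟨fun w c hw => by
      have hwv : w ≠ v := by rintro rfl; rw [hv] at hw; exact nomatch hw
      rw [Function.update_of_ne hwv]; exact hσ.1.1 w c hw, by simp⟩, hP σ b hσ.2⟩
  · intro σ hσ
    simp only [mem_filter, mem_univ, true_and, compat_update_iff X v hv] at hσ ⊢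
    exact ⟨⟨fun w c hw => by
      have hwv : w ≠ v := by rintro rfl; rw [hv] at hw; exact nomatch hw
      rw [Function.update_of_ne hwv]; exact hσ.1.1 w c hw, by simp⟩, hP σ a hσ.2⟩

lemma compat_card_pos (hq : 0 < q) (X : Fin n → Option (Fin q)) :
    0 < (Finset.univ.filter fun σ : Fin n → Fin q => Compat X σ).card := by
  rw [Finset.card_pos]
  exact ⟨fun w => (X w).getD ⟨0, hq⟩, by
    simp only [mem_filter, mem_univ, true_and]
    intro v a h; simp [h]⟩

lemma filter_compat_true (X : Fin n → Option (Fin q)) :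
    (Finset.univ.filter fun σ : Fin n → Fin q => Compat X σ ∧ True)
      = Finset.univ.filter fun σ : Fin n → Fin q => Compat X σ := by
  apply Finset.filter_congr; intro σ _; simp

lemma denom_card_eq (hq : 0 < q) (X : Fin n → Option (Fin q)) (v : Fin n)
    (hv : X v = none) (a : Fin q) :
    q * (Finset.univ.filter fun σ : Fin n → Fin q =>
          Compat (Function.update X v (some a)) σ).card
      = (Finset.univ.filter fun σ : Fin n → Fin q => Compat X σ).card := by
  have hsum := sum_card_update X v hv (fun _ => True)
  have hconst : ∀ b : Fin q,
      (Finset.univ.filter fun σ : Fin n → Fin q =>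
        Compat (Function.update X v (some b)) σ ∧ True).card
      = (Finset.univ.filter fun σ : Fin n → Fin q =>
        Compat (Function.update X v (some a)) σ ∧ True).card :=
    fun b => by
      have h := card_update_const X v hv (fun _ => True) (fun _ _ h => h) b a
      convert h using 2 <;> simp
  simp only [and_true] at hsum hconst
  calc q * _ = ∑ _b : Fin q, (Finset.univ.filter fun σ : Fin n → Fin q =>
        Compat (Function.update X v (some a)) σ).card := by
        rw [Finset.sum_const, card_univ, Fintype.card_fin, smul_eq_mul]
    _ = ∑ b : Fin q, (Finset.univ.filter fun σ : Fin n → Fin q =>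
        Compat (Function.update X v (some b)) σ).card :=
        Finset.sum_congr rfl fun b _ => (hconst b).symm
    _ = _ := hsum

lemma numer_card_eq (hq : 0 < q) (viol : Fin m → (Fin n → Fin q) → Prop) (j : Fin m)
    (X : Fin n → Option (Fin q)) (v : Fin n) (hv : X v = none)
    (hinv : ∀ (σ : Fin n → Fin q) (b : Fin q), viol j σ → viol j (Function.update σ v b))
    (a : Fin q) :
    q * (Finset.univ.filter fun σ : Fin n → Fin q =>
          Compat (Function.update X v (some a)) σ ∧ viol j σ).card
      = (Finset.univ.filter fun σ : Fin n → Fin q => Compat X σ ∧ viol j σ).card := by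
  have hsum := sum_card_update X v hv (viol j)
  calc q * _ = ∑ _b : Fin q, (Finset.univ.filter fun σ : Fin n → Fin q =>
        Compat (Function.update X v (some a)) σ ∧ viol j σ).card := by
        rw [Finset.sum_const, card_univ, Fintype.card_fin, smul_eq_mul]
    _ = _ := by
        rw [← hsum]
        exact Finset.sum_congr rfl fun b _ =>
          card_update_const X v hv (viol j) hinv a b

/-- Law of total probability: the conditional probabilities average out. -/

lemma condP_sum (hq : 0 < q) (viol : Fin m → (Fin n → Fin q) → Prop) (j : Fin m)
    (X : Fin n → Option (Fin q)) (v : Fin n) (hv : X v = none) :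
    ∑ a : Fin q, condP viol j (Function.update X v (some a))
      = q * condP viol j X := by
  have hNsum := sum_card_update X v hv (viol j)
  have hDpos : ∀ a : Fin q, (0:ℝ) <
      ((Finset.univ.filter fun σ : Fin n → Fin q =>
        Compat (Function.update X v (some a)) σ).card : ℝ) :=
    fun a => by exact_mod_cast compat_card_pos hq _
  have hDpos0 : (0:ℝ) <
      ((Finset.univ.filter fun σ : Fin n → Fin q => Compat X σ).card : ℝ) := by
    exact_mod_cast compat_card_pos hq X
  unfold condP
  have key : ∀ a : Fin q,
      ((Finset.univ.filter fun σ : Fin n → Fin q =>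
          Compat (Function.update X v (some a)) σ ∧ viol j σ).card : ℝ) /
        ((Finset.univ.filter fun σ : Fin n → Fin q =>
          Compat (Function.update X v (some a)) σ).card : ℝ)
      = (q : ℝ) * ((Finset.univ.filter fun σ : Fin n → Fin q =>
          Compat (Function.update X v (some a)) σ ∧ viol j σ).card : ℝ) /
        ((Finset.univ.filter fun σ : Fin n → Fin q => Compat X σ).card : ℝ) := by
    intro a
    have hD := denom_card_eq hq X v hv a
    have hD' : (q : ℝ) * ((Finset.univ.filter fun σ : Fin n → Fin q =>
        Compat (Function.update X v (some a)) σ).card : ℝ)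
        = ((Finset.univ.filter fun σ : Fin n → Fin q => Compat X σ).card : ℝ) := by
      exact_mod_cast hD
    rw [← hD']
    rw [mul_div_mul_left _ _ (by positivity : (q:ℝ) ≠ 0)]
  rw [Finset.sum_congr rfl fun a _ => key a]
  rw [← Finset.sum_div, ← Finset.mul_sum]
  congr 1
  rw [← Nat.cast_sum, hNsum, mul_div_assoc]

/-- Conditioning on a variable outside `vbl j` does not change the probability. -/

lemma condP_update_eq (hq : 0 < q) (viol : Fin m → (Fin n → Fin q) → Prop) (j : Fin m)
    (X : Fin n → Option (Fin q)) (v : Fin n) (hv : X v = none)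
    (hinv : ∀ (σ : Fin n → Fin q) (b : Fin q), viol j σ → viol j (Function.update σ v b))
    (a : Fin q) :
    condP viol j (Function.update X v (some a)) = condP viol j X := by
  unfold condP
  have hN := numer_card_eq hq viol j X v hv hinv a
  have hD := denom_card_eq hq X v hv a
  have hN' : ((Finset.univ.filter fun σ : Fin n → Fin q =>
      Compat X σ ∧ viol j σ).card : ℝ)
      = (q : ℝ) * ((Finset.univ.filter fun σ : Fin n → Fin q =>
        Compat (Function.update X v (some a)) σ ∧ viol j σ).card : ℝ) := by
    exact_mod_cast hN.symm
  have hD' : ((Finset.univ.filter fun σ : Fin n → Fin q => Compat X σ).card : ℝ)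
      = (q : ℝ) * ((Finset.univ.filter fun σ : Fin n → Fin q =>
        Compat (Function.update X v (some a)) σ).card : ℝ) := by
    exact_mod_cast hD.symm
  rw [hN', hD', mul_div_mul_left _ _ (by positivity : (q:ℝ) ≠ 0)]

lemma condP_nonneg (viol : Fin m → (Fin n → Fin q) → Prop) (j : Fin m)
    (X : Fin n → Option (Fin q)) : 0 ≤ condP viol j X := by
  unfold condP; positivity

lemma greedyRun_succ (vbl : Fin m → Finset (Fin n))
    (viol : Fin m → (Fin n → Fin q) → Prop) (p' : ℝ) (ω : Fin n → Fin q) (h : ℕ) :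
    greedyRun vbl viol p' ω (h+1)
      = if hh : h < n then greedyStep vbl viol p' ω (greedyRun vbl viol p' ω h) ⟨h, hh⟩
        else greedyRun vbl viol p' ω h := rfl

lemma greedyStep_seed_eq (vbl : Fin m → Finset (Fin n))
    (viol : Fin m → (Fin n → Fin q) → Prop) (p' : ℝ) (ω ω' : Fin n → Fin q)
    (st : (Fin n → Option (Fin q)) × Finset (Fin n)) (i : Fin n) (hω : ω i = ω' i) :
    greedyStep vbl viol p' ω st i = greedyStep vbl viol p' ω' st i := by
  unfold greedyStep; rw [hω]

lemma greedyRun_agree (vbl : Fin m → Finset (Fin n))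
    (viol : Fin m → (Fin n → Fin q) → Prop) (p' : ℝ) (ω ω' : Fin n → Fin q) :
    ∀ h : ℕ, (∀ v : Fin n, (v : ℕ) < h → ω v = ω' v) →
      greedyRun vbl viol p' ω h = greedyRun vbl viol p' ω' h := by
  intro h
  induction h with
  | zero => intro _; rfl
  | succ h ih =>
    intro hag
    have hlow : ∀ v : Fin n, (v : ℕ) < h → ω v = ω' v :=
      fun v hv => hag v (Nat.lt_succ_of_lt hv)
    unfold greedyRun
    by_cases hh : h < n
    · rw [dif_pos hh, dif_pos hh, ih hlow,
        greedyStep_seed_eq vbl viol p' ω ω' _ ⟨h, hh⟩ (hag ⟨h, hh⟩ (Nat.lt_succ_self h))]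
    · rw [dif_neg hh, dif_neg hh, ih hlow]

lemma greedyRun_none (vbl : Fin m → Finset (Fin n))
    (viol : Fin m → (Fin n → Fin q) → Prop) (p' : ℝ) (ω : Fin n → Fin q) :
    ∀ h : ℕ, ∀ v : Fin n, h ≤ (v : ℕ) → (greedyRun vbl viol p' ω h).1 v = none := by
  intro h
  induction h with
  | zero => intro v _; rfl
  | succ h ih =>
    intro v hv
    have hv' : h ≤ (v : ℕ) := Nat.le_of_succ_le hv
    unfold greedyRun
    by_cases hh : h < n
    · rw [dif_pos hh]
      unfold greedyStep
      by_cases hf : (⟨h, hh⟩ : Fin n) ∈ (greedyRun vbl viol p' ω h).2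
      · rw [if_pos hf]; exact ih v hv'
      · rw [if_neg hf]
        simp only
        have hne : v ≠ (⟨h, hh⟩ : Fin n) := by
          intro he; rw [he] at hv; exact absurd hv (by simp)
        rw [Function.update_of_ne hne]
        exact ih v hv'
    · rw [dif_neg hh]; exact ih v hv'

lemma sum_update_seed (f : (Fin n → Fin q) → ℝ) (i : Fin n) :
    ∑ ω : Fin n → Fin q, ∑ a : Fin q, f (Function.update ω i a)
      = (q : ℝ) * ∑ ω : Fin n → Fin q, f ω := by
  have hinv : Function.Involutive (fun p : (Fin n → Fin q) × Fin q =>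
      (Function.update p.1 i p.2, p.1 i)) := by
    rintro ⟨ω, a⟩
    refine Prod.ext ?_ ?_ <;> simp [Function.update_idem]
  have hsum := Equiv.sum_comp (hinv.toPerm _)
    (fun p : (Fin n → Fin q) × Fin q => f p.1)
  calc ∑ ω : Fin n → Fin q, ∑ a : Fin q, f (Function.update ω i a)
      = ∑ p : (Fin n → Fin q) × Fin q, f (Function.update p.1 i p.2) :=
        (Fintype.sum_prod_type (fun p : (Fin n → Fin q) × Fin q =>
          f (Function.update p.1 i p.2))).symm
    _ = ∑ p : (Fin n → Fin q) × Fin q, f p.1 := hsum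
    _ = ∑ ω : Fin n → Fin q, ∑ _a : Fin q, f ω :=
        Fintype.sum_prod_type (fun p : (Fin n → Fin q) × Fin q => f p.1)
    _ = (q : ℝ) * ∑ ω : Fin n → Fin q, f ω := by
        simp [Finset.sum_const, Finset.mul_sum, mul_comm]

lemma sum_prod_condP (hq : 0 < q) (vbl : Fin m → Finset (Fin n))
    (viol : Fin m → (Fin n → Fin q) → Prop)
    (hdep : ∀ j (σ τ : Fin n → Fin q), (∀ v ∈ vbl j, σ v = τ v) → (viol j σ ↔ viol j τ))
    (T : Finset (Fin m))
    (hT : ∀ C ∈ T, ∀ C' ∈ T, C ≠ C' → Disjoint (vbl C) (vbl C'))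
    (X : Fin n → Option (Fin q)) (i : Fin n) (hXi : X i = none) :
    ∑ a : Fin q, ∏ C ∈ T, condP viol C (Function.update X i (some a))
      = (q : ℝ) * ∏ C ∈ T, condP viol C X := by
  have hinv : ∀ C : Fin m, i ∉ vbl C →
      ∀ (σ : Fin n → Fin q) (b : Fin q), viol C σ → viol C (Function.update σ i b) := by
    intro C hiC σ b hσ
    refine (hdep C σ (Function.update σ i b) fun v hv => ?_).mp hσ
    have hvi : v ≠ i := fun he => hiC (he ▸ hv)
    rw [Function.update_of_ne hvi]
  by_cases hex : ∃ C0 ∈ T, i ∈ vbl C0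
  · obtain ⟨C0, hC0T, hC0i⟩ := hex
    have herase : ∀ (a : Fin q), ∀ C ∈ T.erase C0,
        condP viol C (Function.update X i (some a)) = condP viol C X := by
      intro a C hC
      have hne : C ≠ C0 := (Finset.mem_erase.mp hC).1
      have hd := hT C (Finset.mem_of_mem_erase hC) C0 hC0T hne
      have hiC : i ∉ vbl C := fun hi => (Finset.disjoint_left.mp hd hi) hC0i
      exact condP_update_eq hq viol C X i hXi (hinv C hiC) a
    have hsplit : ∀ a : Fin q, ∏ C ∈ T, condP viol C (Function.update X i (some a))
        = condP viol C0 (Function.update X i (some a)) *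
          ∏ C ∈ T.erase C0, condP viol C X := by
      intro a
      rw [← Finset.mul_prod_erase T _ hC0T]
      exact congrArg _ (Finset.prod_congr rfl (herase a))
    rw [Finset.sum_congr rfl fun a _ => hsplit a, ← Finset.sum_mul,
      condP_sum hq viol C0 X i hXi, ← Finset.mul_prod_erase T _ hC0T]
    ring
  · push_neg at hex
    have hconst : ∀ a : Fin q, ∏ C ∈ T, condP viol C (Function.update X i (some a))
        = ∏ C ∈ T, condP viol C X :=
      fun a => Finset.prod_congr rfl fun C hC =>
        condP_update_eq hq viol C X i hXi (hinv C (hex C hC)) a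
    rw [Finset.sum_congr rfl fun a _ => hconst a, Finset.sum_const]
    simp [mul_comm]

end AuxLemmas

/-- If `ℙ[C] ≤ p` for every constraint `C` and `T` is a collection of constraints with
pairwise disjoint variable sets, then `E_ν[ ∏_{C ∈ T} ℙ[C | P_s] ] ≤ p^|T|`, where `ν` is
the distribution of the final partial assignment `P_s` of the randomized greedy freezing
procedure, realized here as `(greedyRun vbl viol p' ω n).1` for a uniformly random seed
`ω : Fin n → Fin q`. -/
theorem greedy_expectation_product_le {n q m : ℕ} (hq : 0 < q)
    (vbl : Fin m → Finset (Fin n)) (viol : Fin m → (Fin n → Fin q) → Prop)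
    (hdep : ∀ j (σ τ : Fin n → Fin q), (∀ v ∈ vbl j, σ v = τ v) → (viol j σ ↔ viol j τ))
    (p' : ℝ) (hp' : p' ∈ Set.Ioo (0 : ℝ) 1)
    (p : ℝ) (hp0 : 0 ≤ p)
    (hp : ∀ j, condP viol j (fun _ => none) ≤ p)
    (T : Finset (Fin m))
    (hT : ∀ C ∈ T, ∀ C' ∈ T, C ≠ C' → Disjoint (vbl C) (vbl C')) :
    (∑ ω : Fin n → Fin q, ∏ C ∈ T, condP viol C (greedyRun vbl viol p' ω n).1)
        / (q : ℝ) ^ n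
      ≤ p ^ T.card := by
  have hqR : (0 : ℝ) < q := by exact_mod_cast hq
  have key : ∀ h : ℕ,
      ∑ ω : Fin n → Fin q, ∏ C ∈ T, condP viol C (greedyRun vbl viol p' ω h).1
        = (q : ℝ) ^ n * ∏ C ∈ T, condP viol C (fun _ => none) := by
    intro h
    induction h with
    | zero =>
      have : ∀ ω : Fin n → Fin q, (greedyRun vbl viol p' ω 0).1 = fun _ => none :=
        fun ω => rfl
      simp only [this, Finset.sum_const, card_univ, nsmul_eq_mul]
      congr 1
      simp [Fintype.card_fun]
    | succ h ih =>
      by_cases hh : h < n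
      · set i : Fin n := ⟨h, hh⟩ with hi
        have hmul : (q : ℝ) *
            (∑ ω : Fin n → Fin q, ∏ C ∈ T, condP viol C (greedyRun vbl viol p' ω (h+1)).1)
            = (q : ℝ) *
            (∑ ω : Fin n → Fin q, ∏ C ∈ T, condP viol C (greedyRun vbl viol p' ω h).1) := by
          rw [← sum_update_seed
            (fun ω => ∏ C ∈ T, condP viol C (greedyRun vbl viol p' ω (h+1)).1) i]
          have hterm : ∀ (ω : Fin n → Fin q) (a : Fin q),
              ∏ C ∈ T, condP viol C (greedyRun vbl viol p' (Function.update ω i a) (h+1)).1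
              = ∏ C ∈ T, condP viol C
                  (greedyStep vbl viol p' (Function.update ω i a)
                    (greedyRun vbl viol p' ω h) i).1 := by
            intro ω a
            have hrun : greedyRun vbl viol p' (Function.update ω i a) h
                = greedyRun vbl viol p' ω h := by
              refine greedyRun_agree vbl viol p' _ _ h fun v hv => ?_
              have hvi : v ≠ i := by
                intro he; rw [he] at hv; exact absurd hv (by simp [hi])
              rw [Function.update_of_ne hvi]
            have : greedyRun vbl viol p' (Function.update ω i a) (h+1)
                = greedyStep vbl viol p' (Function.update ω i a)
                  (greedyRun vbl viol p' ω h) i := by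
              rw [greedyRun_succ, dif_pos hh, hrun]
            rw [this]
          have hinner : ∀ ω : Fin n → Fin q,
              ∑ a : Fin q, ∏ C ∈ T, condP viol C
                  (greedyStep vbl viol p' (Function.update ω i a)
                    (greedyRun vbl viol p' ω h) i).1
              = (q : ℝ) * ∏ C ∈ T, condP viol C (greedyRun vbl viol p' ω h).1 := by
            intro ω
            set st := greedyRun vbl viol p' ω h with hst
            have hXi : st.1 i = none := greedyRun_none vbl viol p' ω h i (by simp [hi])
            by_cases hf : i ∈ st.2
            · have : ∀ a : Fin q,
                  (greedyStep vbl viol p' (Function.update ω i a) st i).1 = st.1 := by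
                intro a; unfold greedyStep; rw [if_pos hf]
              simp only [this, Finset.sum_const, card_univ, Fintype.card_fin,
                nsmul_eq_mul]
            · have hfst : ∀ a : Fin q,
                  (greedyStep vbl viol p' (Function.update ω i a) st i).1
                  = Function.update st.1 i (some a) := by
                intro a; unfold greedyStep; rw [if_neg hf]
                simp
              simp only [hfst]
              exact sum_prod_condP hq vbl viol hdep T hT st.1 i hXi
          calc ∑ ω : Fin n → Fin q, ∑ a : Fin q,
                ∏ C ∈ T, condP viol C (greedyRun vbl viol p' (Function.update ω i a) (h+1)).1
              = ∑ ω : Fin n → Fin q,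
                (q : ℝ) * ∏ C ∈ T, condP viol C (greedyRun vbl viol p' ω h).1 := by
                refine Finset.sum_congr rfl fun ω _ => ?_
                rw [Finset.sum_congr rfl fun a _ => hterm ω a, hinner ω]
            _ = (q : ℝ) * ∑ ω : Fin n → Fin q,
                ∏ C ∈ T, condP viol C (greedyRun vbl viol p' ω h).1 :=
                (Finset.mul_sum _ _ _).symm
        have := mul_left_cancel₀ (ne_of_gt hqR) hmul
        rw [this, ih]
      · have heq : ∀ ω : Fin n → Fin q,
            greedyRun vbl viol p' ω (h+1) = greedyRun vbl viol p' ω h := by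
          intro ω; rw [greedyRun_succ, dif_neg hh]
        simp only [heq]; exact ih
  rw [key n, mul_div_cancel_left₀ _ (by positivity : ((q:ℝ)^n) ≠ 0)]
  calc ∏ C ∈ T, condP viol C (fun _ => none)
      ≤ ∏ _C ∈ T, p :=
        Finset.prod_le_prod (fun C _ => condP_nonneg viol C _) (fun C _ => hp C)
    _ = p ^ T.card := Finset.prod_const p
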